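/- Assume hypotheses (H). Let x be a vertex of Γ and let y, z be vertices at distance 2 from x. Then y and z are adjacent if and only if the subgraph of Γ induced on the set of common neighbours of x, y and z is isomorphic to a single edge K_2 or to the disjoint union of two edges 2·K_2. -/

import Mathlib

open SimpleGraph

/-- The `(n × m)`-grid: the Cartesian product of the complete graphs `K_n` and `K_m`. -/
def gridGraph (n m : ℕ) : SimpleGraph (Fin n × Fin m) where
  Adj a b := a ≠ b ∧ (a.1 = b.1 ∨ a.2 = b.2)
  symm := ⟨fun a b h => ⟨h.1.symm, h.2.imp Eq.symm Eq.symm⟩⟩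
  loopless := ⟨fun a h => h.1 rfl⟩

/-- The disjoint union of two edges, `2·K₂`: vertices `{0,1,2,3}` with edges `01` and `23`. -/
def twoK2 : SimpleGraph (Fin 4) where
  Adj a b := a ≠ b ∧ a.val / 2 = b.val / 2
  symm := ⟨fun a b h => ⟨h.1.symm, h.2.symm⟩⟩
  loopless := ⟨fun a h => h.1 rfl⟩

variable {V W : Type} {Γ : SimpleGraph V}

lemma iso_adj_transfer {s : Set V} {H : SimpleGraph W} (φ : Γ.induce s ≃g H) (a b : s) :
    H.Adj (φ a) (φ b) ↔ Γ.Adj a b := by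
  rw [φ.map_rel_iff]; rfl


lemma iso_K2 {a b : V} (hne : a ≠ b) (hadj : Γ.Adj a b) {S : Set V} (hS : S = {a, b}) :
    Nonempty ((Γ.induce S) ≃g (⊤ : SimpleGraph (Fin 2))) := by
  classical
  subst hS
  have ha : a ∈ ({a, b} : Set V) := by simp
  have hb : b ∈ ({a, b} : Set V) := by simp
  refine ⟨⟨⟨fun w => if (w : V) = a then 0 else 1,
    fun i => if i = 0 then ⟨a, ha⟩ else ⟨b, hb⟩, ?_, ?_⟩, ?_⟩⟩
  · rintro ⟨w, hw⟩
    rcases hw with h | h <;> subst h <;> simp [hne, hne.symm]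
  · intro i
    fin_cases i <;> simp [hne, hne.symm]
  · rintro ⟨u, hu⟩ ⟨w, hw⟩
    rcases hu with h | h <;> rcases hw with h' | h' <;> subst h <;> subst h' <;>
      simp [hne, hne.symm, hadj, hadj.symm, Γ.irrefl]

lemma iso_2K2 {a b c d : V} (hab : a ≠ b) (hac : a ≠ c) (had : a ≠ d) (hbc : b ≠ c)
    (hbd : b ≠ d) (hcd : c ≠ d) (eab : Γ.Adj a b) (ecd : Γ.Adj c d)
    (nac : ¬ Γ.Adj a c) (nad : ¬ Γ.Adj a d) (nbc : ¬ Γ.Adj b c) (nbd : ¬ Γ.Adj b d)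
    {S : Set V} (hS : S = {a, b, c, d}) :
    Nonempty ((Γ.induce S) ≃g twoK2) := by
  classical
  have nca : ¬ Γ.Adj c a := fun h => nac h.symm
  have nda : ¬ Γ.Adj d a := fun h => nad h.symm
  have ncb : ¬ Γ.Adj c b := fun h => nbc h.symm
  have ndb : ¬ Γ.Adj d b := fun h => nbd h.symm
  subst hS
  have ha : a ∈ ({a, b, c, d} : Set V) := by simp
  have hb : b ∈ ({a, b, c, d} : Set V) := by simp
  have hc : c ∈ ({a, b, c, d} : Set V) := by simp
  have hd : d ∈ ({a, b, c, d} : Set V) := by simp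
  refine ⟨⟨⟨fun w => if (w : V) = a then 0 else if (w : V) = b then 1
      else if (w : V) = c then 2 else 3,
    fun i => if i = 0 then ⟨a, ha⟩ else if i = 1 then ⟨b, hb⟩
      else if i = 2 then ⟨c, hc⟩ else ⟨d, hd⟩, ?_, ?_⟩, ?_⟩⟩
  · rintro ⟨w, hw⟩
    rcases hw with h | h | h | h <;> subst h <;>
      simp [hab, hac, had, hbc, hbd, hcd, hab.symm, hac.symm, had.symm, hbc.symm,
        hbd.symm, hcd.symm]
  · intro i
    fin_cases i <;>
      simp [hab, hac, had, hbc, hbd, hcd, hab.symm, hac.symm, had.symm, hbc.symm,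
        hbd.symm, hcd.symm]
  · rintro ⟨u, hu⟩ ⟨w, hw⟩
    rcases hu with h | h | h | h <;> rcases hw with h' | h' | h' | h' <;> subst h <;> subst h' <;>
      simp [twoK2, hab, hac, had, hbc, hbd, hcd, hab.symm, hac.symm, had.symm, hbc.symm,
        hbd.symm, hcd.symm, eab, ecd, eab.symm, ecd.symm, nac, nad, nbc, nbd,
        nca, nda, ncb, ndb, Γ.irrefl] <;> decide

lemma grid_adj {n m : ℕ} {a b : Fin n × Fin m} :
    (gridGraph n m).Adj a b ↔ a ≠ b ∧ (a.1 = b.1 ∨ a.2 = b.2) := Iff.rfl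

lemma grid_nonadj_coords {n m : ℕ} {a b : Fin n × Fin m} (h : ¬ (gridGraph n m).Adj a b)
    (hne : a ≠ b) : a.1 ≠ b.1 ∧ a.2 ≠ b.2 := by
  rw [grid_adj] at h
  push_neg at h
  exact ⟨fun hh => (h hne).1 hh, fun hh => (h hne).2 hh⟩

/-- In the grid, two nonadjacent vertices have exactly the two "corners" as common
neighbours. -/
lemma grid_common_nbrs {n m : ℕ} {X Y : Fin n × Fin m} (h1 : X.1 ≠ Y.1) (h2 : X.2 ≠ Y.2) :
    {P : Fin n × Fin m | (gridGraph n m).Adj X P ∧ (gridGraph n m).Adj Y P}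
      = {(X.1, Y.2), (Y.1, X.2)} := by
  ext P
  simp only [Set.mem_setOf_eq, Set.mem_insert_iff, Set.mem_singleton_iff, grid_adj]
  constructor
  · rintro ⟨⟨hPX, hx1 | hx2⟩, ⟨hPY, hy1 | hy2⟩⟩
    · exact absurd (hx1.trans hy1.symm) h1
    · left; rw [Prod.ext_iff]; exact ⟨hx1.symm, hy2.symm⟩
    · right; rw [Prod.ext_iff]; exact ⟨hy1.symm, hx2.symm⟩
    · exact absurd (hx2.trans hy2.symm) h2
  · rintro (rfl | rfl) <;>
      refine ⟨⟨?_, ?_⟩, ?_, ?_⟩ <;>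
      simp [Prod.ext_iff, h1, h2, Ne.symm h1, Ne.symm h2]

lemma grid_pigeon {n m : ℕ} {X Y Z B : Fin n × Fin m}
    (hXY1 : X.1 ≠ Y.1) (hXY2 : X.2 ≠ Y.2) (hXZ1 : X.1 ≠ Z.1) (hXZ2 : X.2 ≠ Z.2)
    (hYZ1 : Y.1 ≠ Z.1) (hYZ2 : Y.2 ≠ Z.2)
    (hX : (gridGraph n m).Adj B X) (hY : (gridGraph n m).Adj B Y)
    (hZ : (gridGraph n m).Adj B Z) : False := by
  rcases hX.2 with h | h <;> rcases hY.2 with h' | h' <;> rcases hZ.2 with h'' | h'' <;>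
    first
      | exact hXY1 (h.symm.trans h')
      | exact hXY2 (h.symm.trans h')
      | exact hXZ1 (h.symm.trans h'')
      | exact hXZ2 (h.symm.trans h'')
      | exact hYZ1 (h'.symm.trans h'')
      | exact hYZ2 (h'.symm.trans h'')

section Local

variable {n m : ℕ}

/-- If `x, y` are two nonadjacent neighbours of `w`, then `w, x, y` have exactly two common
neighbours, and these are nonadjacent. -/
lemma local_common_pair (hloc : ∀ x : V, Nonempty ((Γ.induce (Γ.neighborSet x)) ≃g gridGraph n m))
    {w x y : V} (hwx : Γ.Adj w x) (hwy : Γ.Adj w y) (hxy : ¬ Γ.Adj x y) (hne : x ≠ y) :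
    ∃ c₁ c₂ : V, c₁ ≠ c₂ ∧ ¬ Γ.Adj c₁ c₂ ∧
      {t : V | Γ.Adj w t ∧ Γ.Adj x t ∧ Γ.Adj y t} = {c₁, c₂} := by
  obtain ⟨φ⟩ := hloc w
  set xs : Γ.neighborSet w := ⟨x, hwx⟩ with hxs
  set ys : Γ.neighborSet w := ⟨y, hwy⟩ with hys
  set X := φ xs with hX
  set Y := φ ys with hY
  have hXYne : X ≠ Y := by
    intro h
    exact hne (Subtype.ext_iff.1 (φ.toEquiv.injective h))
  have hXYnadj : ¬ (gridGraph n m).Adj X Y := fun h => hxy ((iso_adj_transfer φ xs ys).1 h)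
  obtain ⟨h1, h2⟩ := grid_nonadj_coords hXYnadj hXYne
  set P₁ : Fin n × Fin m := (X.1, Y.2) with hP₁
  set P₂ : Fin n × Fin m := (Y.1, X.2) with hP₂
  have hsymm : ∀ P, φ (φ.symm P) = P := fun P => φ.apply_symm_apply P
  refine ⟨(φ.symm P₁ : Γ.neighborSet w), (φ.symm P₂ : Γ.neighborSet w), ?_, ?_, ?_⟩
  · intro h
    have : φ.symm P₁ = φ.symm P₂ := Subtype.ext h
    have : P₁ = P₂ := by
      have := congrArg φ this
      rwa [hsymm, hsymm] at this
    have h' : P₁.1 = P₂.1 := congrArg Prod.fst this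
    exact h1 h'
  · intro h
    have := (iso_adj_transfer φ (φ.symm P₁) (φ.symm P₂)).2 h
    rw [hsymm, hsymm] at this
    rcases this.2 with hc | hc
    · exact h1 hc
    · exact h2 hc.symm
  · ext t
    simp only [Set.mem_setOf_eq, Set.mem_insert_iff, Set.mem_singleton_iff]
    constructor
    · rintro ⟨hwt, hxt, hyt⟩
      set ts : Γ.neighborSet w := ⟨t, hwt⟩ with hts
      have hXT : (gridGraph n m).Adj X (φ ts) := (iso_adj_transfer φ xs ts).2 hxt
      have hYT : (gridGraph n m).Adj Y (φ ts) := (iso_adj_transfer φ ys ts).2 hyt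
      have : φ ts ∈ {P : Fin n × Fin m |
          (gridGraph n m).Adj X P ∧ (gridGraph n m).Adj Y P} := ⟨hXT, hYT⟩
      rw [grid_common_nbrs h1 h2] at this
      rcases this with h | h
      · left
        have : ts = φ.symm P₁ := by
          have := congrArg φ.symm h
          rwa [φ.symm_apply_apply] at this
        exact congrArg Subtype.val this
      · right
        have : ts = φ.symm P₂ := by
          have := congrArg φ.symm h
          rwa [φ.symm_apply_apply] at this
        exact congrArg Subtype.val this
    · have key : ∀ P : Fin n × Fin m, (gridGraph n m).Adj X P → (gridGraph n m).Adj Y P →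
          Γ.Adj w ↑(φ.symm P) ∧ Γ.Adj x ↑(φ.symm P) ∧ Γ.Adj y ↑(φ.symm P) := by
        intro P hXP hYP
        refine ⟨(φ.symm P).2, ?_, ?_⟩
        · have := (iso_adj_transfer φ xs (φ.symm P)).1 (by rwa [hsymm])
          exact this
        · have := (iso_adj_transfer φ ys (φ.symm P)).1 (by rwa [hsymm])
          exact this
      rintro (rfl | rfl)
      · refine key P₁ ?_ ?_
        · exact ⟨fun hh => h2 (show X.2 = P₁.2 from congrArg Prod.snd hh), Or.inl rfl⟩
        · exact ⟨fun hh => h1 (show Y.1 = P₁.1 from congrArg Prod.fst hh).symm, Or.inr rfl⟩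
      · refine key P₂ ?_ ?_
        · exact ⟨fun hh => h1 (show X.1 = P₂.1 from congrArg Prod.fst hh), Or.inr rfl⟩
        · exact ⟨fun hh => h2 (show Y.2 = P₂.2 from congrArg Prod.snd hh).symm, Or.inl rfl⟩

/-- Three pairwise nonadjacent neighbours of `w` have no common neighbour adjacent to `w`. -/
lemma no_edge_in_triple (hloc : ∀ x : V, Nonempty ((Γ.induce (Γ.neighborSet x)) ≃g gridGraph n m))
    {x y z w w' : V} (hxy : ¬ Γ.Adj x y) (hxz : ¬ Γ.Adj x z) (hyz : ¬ Γ.Adj y z)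
    (nxy : x ≠ y) (nxz : x ≠ z) (nyz : y ≠ z)
    (hwx : Γ.Adj w x) (hwy : Γ.Adj w y) (hwz : Γ.Adj w z) (hww' : Γ.Adj w w')
    (h'x : Γ.Adj w' x) (h'y : Γ.Adj w' y) (h'z : Γ.Adj w' z) : False := by
  obtain ⟨φ⟩ := hloc w
  set xs : Γ.neighborSet w := ⟨x, hwx⟩
  set ys : Γ.neighborSet w := ⟨y, hwy⟩
  set zs : Γ.neighborSet w := ⟨z, hwz⟩
  set bs : Γ.neighborSet w := ⟨w', hww'⟩
  have hinj : ∀ (u v : Γ.neighborSet w), (u : V) ≠ (v : V) → φ u ≠ φ v := by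
    intro u v h hh
    exact h (Subtype.ext_iff.1 (φ.toEquiv.injective hh))
  have cXY := grid_nonadj_coords (fun h => hxy ((iso_adj_transfer φ xs ys).1 h))
    (hinj xs ys nxy)
  have cXZ := grid_nonadj_coords (fun h => hxz ((iso_adj_transfer φ xs zs).1 h))
    (hinj xs zs nxz)
  have cYZ := grid_nonadj_coords (fun h => hyz ((iso_adj_transfer φ ys zs).1 h))
    (hinj ys zs nyz)
  exact grid_pigeon cXY.1 cXY.2 cXZ.1 cXZ.2 cYZ.1 cYZ.2
    ((iso_adj_transfer φ bs xs).2 h'x)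
    ((iso_adj_transfer φ bs ys).2 h'y)
    ((iso_adj_transfer φ bs zs).2 h'z)

end Local

instance gridAdjDec {n m : ℕ} : DecidableRel (gridGraph n m).Adj :=
  fun a b => decidable_of_iff _ grid_adj.symm

/-- In a 6-element "hexagon configuration" in the grid, every nonempty row contains exactly
two cells. -/
lemma grid_row_struct {n m : ℕ} {F : Finset (Fin n × Fin m)}
    (hP2 : ∀ p ∈ F, ∃ c₁ c₂ : Fin n × Fin m, c₁ ≠ c₂ ∧ ¬ (gridGraph n m).Adj c₁ c₂ ∧
      F.filter (fun q => (gridGraph n m).Adj p q) = {c₁, c₂})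
    {r : Fin n} (hr : ∃ f ∈ F, f.1 = r) :
    ∃ a b, a ≠ b ∧ a.1 = r ∧ b.1 = r ∧ F.filter (fun q => q.1 = r) = {a, b} := by
  classical
  obtain ⟨f, hfF, hf1⟩ := hr
  obtain ⟨c₁, c₂, hc, hcn, hpair⟩ := hP2 f hfF
  have hmemc : ∀ q, q ∈ F ∧ (gridGraph n m).Adj f q ↔ (q = c₁ ∨ q = c₂) := by
    intro q
    rw [← Finset.mem_filter, hpair]
    simp
  have hrowsub : ∀ q ∈ F, q.1 = r → q ≠ f → (q = c₁ ∨ q = c₂) := by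
    intro q hq hq1 hqf
    exact (hmemc q).1 ⟨hq, ⟨fun h => hqf h.symm, Or.inl (hf1.trans hq1.symm)⟩⟩
  have hc₁F : c₁ ∈ F ∧ (gridGraph n m).Adj f c₁ := (hmemc c₁).2 (Or.inl rfl)
  have hc₂F : c₂ ∈ F ∧ (gridGraph n m).Adj f c₂ := (hmemc c₂).2 (Or.inr rfl)
  by_cases h1 : c₁.1 = r <;> by_cases h2 : c₂.1 = r
  · exact absurd ⟨hc, Or.inl (h1.trans h2.symm)⟩ hcn
  · -- c₁ in the row, c₂ not
    refine ⟨f, c₁, fun h => (gridGraph n m).irrefl (h ▸ hc₁F.2), hf1, h1, ?_⟩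
    ext q
    simp only [Finset.mem_filter, Finset.mem_insert, Finset.mem_singleton]
    constructor
    · rintro ⟨hq, hq1⟩
      by_cases hqf : q = f
      · exact Or.inl hqf
      · rcases hrowsub q hq hq1 hqf with rfl | rfl
        · exact Or.inr rfl
        · exact absurd hq1 h2
    · rintro (rfl | rfl)
      · exact ⟨hfF, hf1⟩
      · exact ⟨hc₁F.1, h1⟩
  · refine ⟨f, c₂, fun h => (gridGraph n m).irrefl (h ▸ hc₂F.2), hf1, h2, ?_⟩
    ext q
    simp only [Finset.mem_filter, Finset.mem_insert, Finset.mem_singleton]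
    constructor
    · rintro ⟨hq, hq1⟩
      by_cases hqf : q = f
      · exact Or.inl hqf
      · rcases hrowsub q hq hq1 hqf with rfl | rfl
        · exact absurd hq1 h1
        · exact Or.inr rfl
    · rintro (rfl | rfl)
      · exact ⟨hfF, hf1⟩
      · exact ⟨hc₂F.1, h2⟩
  · -- neither in the row: both must share f's second coordinate, contradiction
    exfalso
    have e1 : c₁.2 = f.2 := by
      rcases hc₁F.2.2 with h | h
      · exact absurd (h.symm.trans hf1) h1
      · exact h.symm
    have e2 : c₂.2 = f.2 := by
      rcases hc₂F.2.2 with h | h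
      · exact absurd (h.symm.trans hf1) h2
      · exact h.symm
    exact hcn ⟨hc, Or.inr (e1.trans e2.symm)⟩

/-- Column version of `grid_row_struct`. -/
lemma grid_col_struct {n m : ℕ} {F : Finset (Fin n × Fin m)}
    (hP2 : ∀ p ∈ F, ∃ c₁ c₂ : Fin n × Fin m, c₁ ≠ c₂ ∧ ¬ (gridGraph n m).Adj c₁ c₂ ∧
      F.filter (fun q => (gridGraph n m).Adj p q) = {c₁, c₂})
    {r : Fin m} (hr : ∃ f ∈ F, f.2 = r) :
    ∃ a b, a ≠ b ∧ a.2 = r ∧ b.2 = r ∧ F.filter (fun q => q.2 = r) = {a, b} := by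
  classical
  obtain ⟨f, hfF, hf1⟩ := hr
  obtain ⟨c₁, c₂, hc, hcn, hpair⟩ := hP2 f hfF
  have hmemc : ∀ q, q ∈ F ∧ (gridGraph n m).Adj f q ↔ (q = c₁ ∨ q = c₂) := by
    intro q
    rw [← Finset.mem_filter, hpair]
    simp
  have hrowsub : ∀ q ∈ F, q.2 = r → q ≠ f → (q = c₁ ∨ q = c₂) := by
    intro q hq hq1 hqf
    exact (hmemc q).1 ⟨hq, ⟨fun h => hqf h.symm, Or.inr (hf1.trans hq1.symm)⟩⟩
  have hc₁F : c₁ ∈ F ∧ (gridGraph n m).Adj f c₁ := (hmemc c₁).2 (Or.inl rfl)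
  have hc₂F : c₂ ∈ F ∧ (gridGraph n m).Adj f c₂ := (hmemc c₂).2 (Or.inr rfl)
  by_cases h1 : c₁.2 = r <;> by_cases h2 : c₂.2 = r
  · exact absurd ⟨hc, Or.inr (h1.trans h2.symm)⟩ hcn
  · refine ⟨f, c₁, fun h => (gridGraph n m).irrefl (h ▸ hc₁F.2), hf1, h1, ?_⟩
    ext q
    simp only [Finset.mem_filter, Finset.mem_insert, Finset.mem_singleton]
    constructor
    · rintro ⟨hq, hq1⟩
      by_cases hqf : q = f
      · exact Or.inl hqf
      · rcases hrowsub q hq hq1 hqf with rfl | rfl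
        · exact Or.inr rfl
        · exact absurd hq1 h2
    · rintro (rfl | rfl)
      · exact ⟨hfF, hf1⟩
      · exact ⟨hc₁F.1, h1⟩
  · refine ⟨f, c₂, fun h => (gridGraph n m).irrefl (h ▸ hc₂F.2), hf1, h2, ?_⟩
    ext q
    simp only [Finset.mem_filter, Finset.mem_insert, Finset.mem_singleton]
    constructor
    · rintro ⟨hq, hq1⟩
      by_cases hqf : q = f
      · exact Or.inl hqf
      · rcases hrowsub q hq hq1 hqf with rfl | rfl
        · exact absurd hq1 h1
        · exact Or.inr rfl
    · rintro (rfl | rfl)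
      · exact ⟨hfF, hf1⟩
      · exact ⟨hc₂F.1, h2⟩
  · exfalso
    have e1 : c₁.1 = f.1 := by
      rcases hc₁F.2.2 with h | h
      · exact h.symm
      · exact absurd (h.symm.trans hf1) h1
    have e2 : c₂.1 = f.1 := by
      rcases hc₂F.2.2 with h | h
      · exact h.symm
      · exact absurd (h.symm.trans hf1) h2
    exact hcn ⟨hc, Or.inl (e1.trans e2.symm)⟩

lemma fiber_two_card {α β : Type*} [DecidableEq β] (s : Finset α) (f : α → β)
    (h : ∀ r ∈ s.image f, (s.filter (fun q => f q = r)).card = 2) :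
    s.card = 2 * (s.image f).card := by
  classical
  rw [Finset.card_eq_sum_card_fiberwise (fun x hx => Finset.mem_image_of_mem f hx)]
  rw [Finset.sum_congr rfl h, Finset.sum_const, smul_eq_mul, mul_comm]

/-- Under hypotheses (H): two vertices `y, z` at distance 2 from `x` are
adjacent iff the subgraph induced on the common neighbours of `x`, `y` and `z` is a single
edge `K₂` or a disjoint union of two edges `2·K₂`. -/
theorem adjacency_via_triple_mu_graph (n m : ℕ) (hm : 3 ≤ m) (hmn : m ≤ n)
    (V : Type) [Fintype V] (Γ : SimpleGraph V)
    (hconn : Γ.Connected)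
    (hdiam : ∃ x y : V, 2 ≤ Γ.dist x y)
    (hloc : ∀ x : V, Nonempty ((Γ.induce (Γ.neighborSet x)) ≃g gridGraph n m))
    (hb0 : ∀ x : V, {y : V | Γ.Adj x y}.ncard = n * m)
    (hb1 : ∀ x y : V, Γ.Adj x y →
      {z : V | Γ.Adj y z ∧ Γ.dist x z = 2}.ncard = (n - 1) * (m - 1))
    (hb2 : ∀ x y : V, Γ.dist x y = 2 →
      {z : V | Γ.Adj y z ∧ Γ.dist x z = 3}.ncard = (n - 3) * (m - 3))
    (hc2 : ∀ x y : V, Γ.dist x y = 2 →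
      {z : V | Γ.Adj x z ∧ Γ.Adj y z}.ncard = 6)
    (x y z : V) (hy : Γ.dist x y = 2) (hz : Γ.dist x z = 2) :
    Γ.Adj y z ↔
      (Nonempty ((Γ.induce {w : V | Γ.Adj x w ∧ Γ.Adj y w ∧ Γ.Adj z w}) ≃g
          (⊤ : SimpleGraph (Fin 2))) ∨
       Nonempty ((Γ.induce {w : V | Γ.Adj x w ∧ Γ.Adj y w ∧ Γ.Adj z w}) ≃g twoK2)) := by
  classical
  have hne_xy : x ≠ y := by rintro rfl; rw [SimpleGraph.dist_self] at hy; omega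
  have hne_xz : x ≠ z := by rintro rfl; rw [SimpleGraph.dist_self] at hz; omega
  have hnadj_xy : ¬ Γ.Adj x y := fun h => by
    have := (dist_eq_one_iff_adj (G := Γ)).mpr h; omega
  have hnadj_xz : ¬ Γ.Adj x z := fun h => by
    have := (dist_eq_one_iff_adj (G := Γ)).mpr h; omega
  constructor
  · -- forward direction
    intro hadj
    have hzy : z ∈ Γ.neighborSet y := hadj
    obtain ⟨φ⟩ := hloc y
    set vert : Fin n × Fin m → V := fun p => ((φ.symm p : Γ.neighborSet y) : V) with hvert
    have v1 : ∀ p, Γ.Adj y (vert p) := fun p => (φ.symm p).2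
    have v2 : Function.Injective vert := by
      intro p q h
      have : φ.symm p = φ.symm q := Subtype.ext h
      have := congrArg φ this
      rwa [φ.apply_symm_apply, φ.apply_symm_apply] at this
    have v3 : ∀ (u : V) (hu : u ∈ Γ.neighborSet y), vert (φ ⟨u, hu⟩) = u := by
      intro u hu
      show ((φ.symm (φ ⟨u, hu⟩) : Γ.neighborSet y) : V) = u
      rw [φ.symm_apply_apply]
    have v4 : ∀ p q, Γ.Adj (vert p) (vert q) ↔ (gridGraph n m).Adj p q := by
      intro p q
      have := iso_adj_transfer φ (φ.symm p) (φ.symm q)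
      rw [φ.apply_symm_apply, φ.apply_symm_apply] at this
      exact this.symm
    set F : Finset (Fin n × Fin m) := Finset.univ.filter (fun p => Γ.Adj x (vert p)) with hF
    set G2 : Finset (Fin n × Fin m) :=
      Finset.univ.filter (fun p => Γ.dist x (vert p) = 2) with hG2
    set G3 : Finset (Fin n × Fin m) :=
      Finset.univ.filter (fun p => Γ.dist x (vert p) = 3) with hG3
    -- identification of vertex sets with finsets in the grid
    have hcard : ∀ (P : V → Prop) (S : Finset (Fin n × Fin m)),
        (∀ p, p ∈ S ↔ P (vert p)) → {t : V | P t ∧ Γ.Adj y t}.ncard = S.card := by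
      intro P S hmem
      have himg : {t : V | P t ∧ Γ.Adj y t} = vert '' ↑S := by
        ext t
        simp only [Set.mem_setOf_eq, Set.mem_image, Finset.mem_coe]
        constructor
        · rintro ⟨hPt, hyt⟩
          exact ⟨φ ⟨t, hyt⟩, (hmem _).2 (by rw [v3 t hyt]; exact hPt), v3 t hyt⟩
        · rintro ⟨q, hq, rfl⟩
          exact ⟨(hmem q).1 hq, v1 q⟩
      rw [himg, Set.ncard_image_of_injective _ v2, Set.ncard_coe_finset]
    have hFmem : ∀ p, p ∈ F ↔ Γ.Adj x (vert p) := by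
      intro p; rw [hF, Finset.mem_filter]; simp
    have hG2mem : ∀ p, p ∈ G2 ↔ Γ.dist x (vert p) = 2 := by
      intro p; rw [hG2, Finset.mem_filter]; simp
    have hG3mem : ∀ p, p ∈ G3 ↔ Γ.dist x (vert p) = 3 := by
      intro p; rw [hG3, Finset.mem_filter]; simp
    have hFcard : F.card = 6 := by
      have h6 := hc2 x y hy
      rwa [hcard (fun s => Γ.Adj x s) F hFmem] at h6
    have hG3card : G3.card = (n - 3) * (m - 3) := by
      have h3 := hb2 x y hy
      have he : {t : V | Γ.Adj y t ∧ Γ.dist x t = 3}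
          = {t : V | (fun s => Γ.dist x s = 3) t ∧ Γ.Adj y t} := by
        ext t; exact and_comm
      rwa [he, hcard (fun s => Γ.dist x s = 3) G3 hG3mem] at h3
    -- distances of neighbours of y from x
    have hd123 : ∀ p, Γ.dist x (vert p) = 1 ∨ Γ.dist x (vert p) = 2 ∨ Γ.dist x (vert p) = 3 := by
      intro p
      have hle : Γ.dist x (vert p) ≤ 3 := by
        have h1 : Γ.dist y (vert p) = 1 := (dist_eq_one_iff_adj (G := Γ)).mpr (v1 p)
        have := hconn.dist_triangle (v := y) (u := x) (w := vert p)
        omega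
      have hne : vert p ≠ x := by
        intro h
        exact hnadj_xy (h ▸ (v1 p)).symm
      have hpos : 0 < Γ.dist x (vert p) := hconn.pos_dist_of_ne (Ne.symm hne)
      omega
    have hFdist : ∀ p, p ∈ F ↔ Γ.dist x (vert p) = 1 := by
      intro p
      rw [hFmem p]
      exact ⟨fun h => (dist_eq_one_iff_adj (G := Γ)).mpr h,
        fun h => (dist_eq_one_iff_adj (G := Γ)).mp h⟩
    have hpart : Finset.univ = F ∪ G2 ∪ G3 := by
      ext p
      simp only [Finset.mem_univ, true_iff, Finset.mem_union, hFdist p, hG2mem p, hG3mem p]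
      rcases hd123 p with h | h | h
      · exact Or.inl (Or.inl h)
      · exact Or.inl (Or.inr h)
      · exact Or.inr h
    have hdisj1 : Disjoint (F ∪ G2) G3 := by
      rw [Finset.disjoint_left]
      intro p hp hp3
      rw [hG3mem] at hp3
      rcases Finset.mem_union.1 hp with h | h
      · rw [hFdist p] at h; omega
      · rw [hG2mem] at h; omega
    have hdisj2 : Disjoint F G2 := by
      rw [Finset.disjoint_left]
      intro p hp hp2
      rw [hG2mem] at hp2
      rw [hFdist p] at hp
      omega
    have hsum : F.card + G2.card + G3.card = n * m := by
      have h1 : (Finset.univ : Finset (Fin n × Fin m)).card = n * m := by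
        simp [Finset.card_univ]
      rw [hpart, Finset.card_union_of_disjoint hdisj1, Finset.card_union_of_disjoint hdisj2]
        at h1
      omega
    -- the hexagon property transferred to the grid
    have hP2 : ∀ p ∈ F, ∃ c₁ c₂ : Fin n × Fin m, c₁ ≠ c₂ ∧ ¬ (gridGraph n m).Adj c₁ c₂ ∧
        F.filter (fun q => (gridGraph n m).Adj p q) = {c₁, c₂} := by
      intro p hp
      have hxw : Γ.Adj x (vert p) := (hFmem p).1 hp
      have hyw : Γ.Adj y (vert p) := v1 p
      obtain ⟨c₁, c₂, hc12, hcnadj, hset⟩ :=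
        local_common_pair hloc hxw.symm hyw.symm hnadj_xy hne_xy
      have hc₁mem : Γ.Adj (vert p) c₁ ∧ Γ.Adj x c₁ ∧ Γ.Adj y c₁ := by
        have h1 : c₁ ∈ ({c₁, c₂} : Set V) := by simp
        rw [← hset] at h1
        exact h1
      have hc₂mem : Γ.Adj (vert p) c₂ ∧ Γ.Adj x c₂ ∧ Γ.Adj y c₂ := by
        have h1 : c₂ ∈ ({c₁, c₂} : Set V) := by simp
        rw [← hset] at h1
        exact h1
      set q₁ := φ ⟨c₁, hc₁mem.2.2⟩ with hq₁def
      set q₂ := φ ⟨c₂, hc₂mem.2.2⟩ with hq₂def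
      have hq₁v : vert q₁ = c₁ := v3 _ _
      have hq₂v : vert q₂ = c₂ := v3 _ _
      refine ⟨q₁, q₂, ?_, ?_, ?_⟩
      · intro h
        exact hc12 (by rw [← hq₁v, ← hq₂v, h])
      · intro h
        have := (v4 q₁ q₂).2 h
        rw [hq₁v, hq₂v] at this
        exact hcnadj this
      · ext q
        simp only [Finset.mem_filter, Finset.mem_insert, Finset.mem_singleton]
        constructor
        · rintro ⟨hqF, hadjpq⟩
          have hq' : vert q ∈ {t : V | Γ.Adj (vert p) t ∧ Γ.Adj x t ∧ Γ.Adj y t} :=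
            ⟨(v4 p q).2 hadjpq, (hFmem q).1 hqF, v1 q⟩
          rw [hset] at hq'
          simp only [Set.mem_insert_iff, Set.mem_singleton_iff] at hq'
          rcases hq' with h | h
          · exact Or.inl (v2 (h.trans hq₁v.symm))
          · exact Or.inr (v2 (h.trans hq₂v.symm))
        · rintro (rfl | rfl)
          · exact ⟨(hFmem q₁).2 (by rw [hq₁v]; exact hc₁mem.2.1),
              (v4 p q₁).1 (by rw [hq₁v]; exact hc₁mem.1)⟩
          · exact ⟨(hFmem q₂).2 (by rw [hq₂v]; exact hc₂mem.2.1),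
              (v4 p q₂).1 (by rw [hq₂v]; exact hc₂mem.1)⟩
    set Rows := F.image Prod.fst with hRowsdef
    set Cols := F.image Prod.snd with hColsdef
    have hRowfib : ∀ r ∈ Rows, (F.filter (fun q => q.1 = r)).card = 2 := by
      intro r hr
      obtain ⟨a, b, hab, _, _, hfil⟩ := grid_row_struct hP2 (Finset.mem_image.1 hr)
      rw [hfil, Finset.card_insert_of_notMem (by simp [hab]), Finset.card_singleton]
    have hColfib : ∀ r ∈ Cols, (F.filter (fun q => q.2 = r)).card = 2 := by
      intro r hr
      obtain ⟨a, b, hab, _, _, hfil⟩ := grid_col_struct hP2 (Finset.mem_image.1 hr)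
      rw [hfil, Finset.card_insert_of_notMem (by simp [hab]), Finset.card_singleton]
    have hRowscard : Rows.card = 3 := by
      have h23 : F.card = 2 * Rows.card := fiber_two_card F Prod.fst hRowfib
      omega
    have hColscard : Cols.card = 3 := by
      have h23 : F.card = 2 * Cols.card := fiber_two_card F Prod.snd hColfib
      omega
    set Region : Finset (Fin n × Fin m) :=
      Rows ×ˢ (Finset.univ : Finset (Fin m)) ∪ (Finset.univ : Finset (Fin n)) ×ˢ Cols
      with hRegiondef
    have hRegmem : ∀ p : Fin n × Fin m, p ∈ Region ↔ p.1 ∈ Rows ∨ p.2 ∈ Cols := by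
      intro p
      rw [hRegiondef, Finset.mem_union, Finset.mem_product, Finset.mem_product]
      simp
    have hRegioncard : Region.card + 9 = 3 * m + 3 * n := by
      have hint : (Rows ×ˢ (Finset.univ : Finset (Fin m)))
          ∩ ((Finset.univ : Finset (Fin n)) ×ˢ Cols) = Rows ×ˢ Cols := by
        ext p
        rw [Finset.mem_inter, Finset.mem_product, Finset.mem_product, Finset.mem_product]
        simp [and_comm]
      have hu := Finset.card_union_add_card_inter
        (Rows ×ˢ (Finset.univ : Finset (Fin m))) ((Finset.univ : Finset (Fin n)) ×ˢ Cols)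
      rw [hint] at hu
      rw [Finset.card_product, Finset.card_product, Finset.card_product] at hu
      rw [Finset.card_univ, Fintype.card_fin] at hu
      rw [Finset.card_univ, Fintype.card_fin] at hu
      rw [hRowscard, hColscard] at hu
      rw [hRegiondef]
      omega
    have hFsub : F ⊆ Region := by
      intro p hp
      exact (hRegmem p).2 (Or.inl (Finset.mem_image_of_mem _ hp))
    have hRF : (Region \ F).card + F.card = Region.card :=
      Finset.card_sdiff_add_card_eq_card hFsub
    have hsub2 : Region \ F ⊆ G2 := by
      intro p hp
      obtain ⟨hpR, hpF⟩ := Finset.mem_sdiff.1 hp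
      have hex : ∃ f ∈ F, (gridGraph n m).Adj p f := by
        rcases (hRegmem p).1 hpR with h | h
        · obtain ⟨f, hfF, hf1⟩ := Finset.mem_image.1 h
          exact ⟨f, hfF, ⟨fun hh => hpF (hh ▸ hfF), Or.inl hf1.symm⟩⟩
        · obtain ⟨f, hfF, hf1⟩ := Finset.mem_image.1 h
          exact ⟨f, hfF, ⟨fun hh => hpF (hh ▸ hfF), Or.inr hf1.symm⟩⟩
      obtain ⟨f, hfF, hpf⟩ := hex
      rw [hG2mem]
      have h1 : Γ.dist x (vert f) = 1 := (hFdist f).1 hfF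
      have h2 : Γ.dist (vert f) (vert p) = 1 :=
        (dist_eq_one_iff_adj (G := Γ)).mpr ((v4 f p).2 hpf.symm)
      have htri := hconn.dist_triangle (u := x) (v := vert f) (w := vert p)
      have hnadjp : ¬ Γ.Adj x (vert p) := fun hh => hpF ((hFmem p).2 hh)
      have hne1 : Γ.dist x (vert p) ≠ 1 :=
        fun hh => hnadjp ((dist_eq_one_iff_adj (G := Γ)).mp hh)
      have hne0 : vert p ≠ x := fun hh => hnadj_xy (hh ▸ v1 p).symm
      have hpos := hconn.pos_dist_of_ne (Ne.symm hne0)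
      omega
    have hcards : G2.card = (Region \ F).card := by
      have key : (n - 3) * (m - 3) + 3 * n + 3 * m = n * m + 9 := by
        obtain ⟨a, ha⟩ : ∃ a, n = a + 3 := ⟨n - 3, by omega⟩
        obtain ⟨b, hb⟩ : ∃ b, m = b + 3 := ⟨m - 3, by omega⟩
        rw [ha, hb, Nat.add_sub_cancel, Nat.add_sub_cancel]
        ring
      omega
    have hG2R : Region \ F = G2 := Finset.eq_of_subset_of_card_le hsub2 hcards.le
    -- locate z in the grid
    have hpzG2 : φ ⟨z, hzy⟩ ∈ G2 := (hG2mem _).2 (by rw [v3 z hzy]; exact hz)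
    set pz := φ ⟨z, hzy⟩ with hpzdef
    have hpzv : vert pz = z := v3 z hzy
    rw [← hG2R] at hpzG2
    obtain ⟨hpzR, hpzF⟩ := Finset.mem_sdiff.1 hpzG2
    -- membership characterisation of the common-neighbour set
    have hSmem : ∀ q, (Γ.Adj x (vert q) ∧ Γ.Adj y (vert q) ∧ Γ.Adj z (vert q))
        ↔ (q ∈ F ∧ (q.1 = pz.1 ∨ q.2 = pz.2)) := by
      intro q
      constructor
      · rintro ⟨h1, _, h3⟩
        have hqF : q ∈ F := (hFmem q).2 h1
        have hza : Γ.Adj (vert pz) (vert q) := by rw [hpzv]; exact h3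
        have hg := (v4 pz q).1 hza
        exact ⟨hqF, hg.2.imp Eq.symm Eq.symm⟩
      · rintro ⟨hqF, hco⟩
        have hnepq : pz ≠ q := fun hh => hpzF (hh ▸ hqF)
        have hg : (gridGraph n m).Adj pz q := ⟨hnepq, hco.imp Eq.symm Eq.symm⟩
        refine ⟨(hFmem q).1 hqF, v1 q, ?_⟩
        have := (v4 pz q).2 hg
        rwa [hpzv] at this
    have hSrep : ∀ w : V, Γ.Adj y w → ∃ q, vert q = w := fun w hw => ⟨φ ⟨w, hw⟩, v3 _ _⟩
    have hrowcol : ∀ q, q ∈ F → q.1 = pz.1 → q.2 = pz.2 → False := by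
      intro q hq h1 h2
      have : q = pz := Prod.ext_iff.2 ⟨h1, h2⟩
      exact hpzF (this ▸ hq)
    by_cases hrow : pz.1 ∈ Rows
    · by_cases hcol : pz.2 ∈ Cols
      · -- both row and column of z meet the hexagon: the triple μ-graph is 2·K₂
        obtain ⟨a, b, hab, ha1, hb1, hrfil⟩ := grid_row_struct hP2 (Finset.mem_image.1 hrow)
        obtain ⟨c, d, hcd, hc2', hd2', hcfil⟩ := grid_col_struct hP2 (Finset.mem_image.1 hcol)
        have haF : a ∈ F := by
          have h : a ∈ F.filter (fun q => q.1 = pz.1) := by rw [hrfil]; simp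
          exact (Finset.mem_filter.1 h).1
        have hbF : b ∈ F := by
          have h : b ∈ F.filter (fun q => q.1 = pz.1) := by rw [hrfil]; simp
          exact (Finset.mem_filter.1 h).1
        have hcF : c ∈ F := by
          have h : c ∈ F.filter (fun q => q.2 = pz.2) := by rw [hcfil]; simp
          exact (Finset.mem_filter.1 h).1
        have hdF : d ∈ F := by
          have h : d ∈ F.filter (fun q => q.2 = pz.2) := by rw [hcfil]; simp
          exact (Finset.mem_filter.1 h).1
        have hac : a ≠ c := fun h => hrowcol a haF ha1 (by rw [h]; exact hc2')
        have had : a ≠ d := fun h => hrowcol a haF ha1 (by rw [h]; exact hd2')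
        have hbc : b ≠ c := fun h => hrowcol b hbF hb1 (by rw [h]; exact hc2')
        have hbd : b ≠ d := fun h => hrowcol b hbF hb1 (by rw [h]; exact hd2')
        have hAB : (gridGraph n m).Adj a b := ⟨hab, Or.inl (ha1.trans hb1.symm)⟩
        have hCD : (gridGraph n m).Adj c d := ⟨hcd, Or.inr (hc2'.trans hd2'.symm)⟩
        have nAC : ¬ (gridGraph n m).Adj a c := by
          rintro ⟨-, h | h⟩
          · exact hrowcol c hcF (h.symm.trans ha1) hc2'
          · exact hrowcol a haF ha1 (h.trans hc2')
        have nAD : ¬ (gridGraph n m).Adj a d := by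
          rintro ⟨-, h | h⟩
          · exact hrowcol d hdF (h.symm.trans ha1) hd2'
          · exact hrowcol a haF ha1 (h.trans hd2')
        have nBC : ¬ (gridGraph n m).Adj b c := by
          rintro ⟨-, h | h⟩
          · exact hrowcol c hcF (h.symm.trans hb1) hc2'
          · exact hrowcol b hbF hb1 (h.trans hc2')
        have nBD : ¬ (gridGraph n m).Adj b d := by
          rintro ⟨-, h | h⟩
          · exact hrowcol d hdF (h.symm.trans hb1) hd2'
          · exact hrowcol b hbF hb1 (h.trans hd2')
        have hSet : {w : V | Γ.Adj x w ∧ Γ.Adj y w ∧ Γ.Adj z w}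
            = {vert a, vert b, vert c, vert d} := by
          ext w
          simp only [Set.mem_setOf_eq, Set.mem_insert_iff, Set.mem_singleton_iff]
          constructor
          · intro hw
            obtain ⟨q, rfl⟩ := hSrep w hw.2.1
            obtain ⟨hqF, hco⟩ := (hSmem q).1 hw
            rcases hco with h | h
            · have hq : q ∈ F.filter (fun q => q.1 = pz.1) := Finset.mem_filter.2 ⟨hqF, h⟩
              rw [hrfil] at hq
              simp only [Finset.mem_insert, Finset.mem_singleton] at hq
              rcases hq with rfl | rfl
              · exact Or.inl rfl
              · exact Or.inr (Or.inl rfl)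
            · have hq : q ∈ F.filter (fun q => q.2 = pz.2) := Finset.mem_filter.2 ⟨hqF, h⟩
              rw [hcfil] at hq
              simp only [Finset.mem_insert, Finset.mem_singleton] at hq
              rcases hq with rfl | rfl
              · exact Or.inr (Or.inr (Or.inl rfl))
              · exact Or.inr (Or.inr (Or.inr rfl))
          · rintro (rfl | rfl | rfl | rfl)
            · exact (hSmem a).2 ⟨haF, Or.inl ha1⟩
            · exact (hSmem b).2 ⟨hbF, Or.inl hb1⟩
            · exact (hSmem c).2 ⟨hcF, Or.inr hc2'⟩
            · exact (hSmem d).2 ⟨hdF, Or.inr hd2'⟩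
        refine Or.inr (iso_2K2 ?_ ?_ ?_ ?_ ?_ ?_ ?_ ?_ ?_ ?_ ?_ ?_ hSet)
        · exact fun h => hab (v2 h)
        · exact fun h => hac (v2 h)
        · exact fun h => had (v2 h)
        · exact fun h => hbc (v2 h)
        · exact fun h => hbd (v2 h)
        · exact fun h => hcd (v2 h)
        · exact (v4 a b).2 hAB
        · exact (v4 c d).2 hCD
        · exact fun h => nAC ((v4 a c).1 h)
        · exact fun h => nAD ((v4 a d).1 h)
        · exact fun h => nBC ((v4 b c).1 h)
        · exact fun h => nBD ((v4 b d).1 h)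
      · -- only the row of z meets the hexagon: the triple μ-graph is K₂
        obtain ⟨a, b, hab, ha1, hb1, hrfil⟩ := grid_row_struct hP2 (Finset.mem_image.1 hrow)
        have haF : a ∈ F := by
          have h : a ∈ F.filter (fun q => q.1 = pz.1) := by rw [hrfil]; simp
          exact (Finset.mem_filter.1 h).1
        have hbF : b ∈ F := by
          have h : b ∈ F.filter (fun q => q.1 = pz.1) := by rw [hrfil]; simp
          exact (Finset.mem_filter.1 h).1
        have hAB : (gridGraph n m).Adj a b := ⟨hab, Or.inl (ha1.trans hb1.symm)⟩
        have hSet : {w : V | Γ.Adj x w ∧ Γ.Adj y w ∧ Γ.Adj z w} = {vert a, vert b} := by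
          ext w
          simp only [Set.mem_setOf_eq, Set.mem_insert_iff, Set.mem_singleton_iff]
          constructor
          · intro hw
            obtain ⟨q, rfl⟩ := hSrep w hw.2.1
            obtain ⟨hqF, hco⟩ := (hSmem q).1 hw
            have h : q.1 = pz.1 := by
              rcases hco with h | h
              · exact h
              · exact absurd (Finset.mem_image.2 ⟨q, hqF, h⟩) hcol
            have hq : q ∈ F.filter (fun q => q.1 = pz.1) := Finset.mem_filter.2 ⟨hqF, h⟩
            rw [hrfil] at hq
            simp only [Finset.mem_insert, Finset.mem_singleton] at hq
            rcases hq with rfl | rfl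
            · exact Or.inl rfl
            · exact Or.inr rfl
          · rintro (rfl | rfl)
            · exact (hSmem a).2 ⟨haF, Or.inl ha1⟩
            · exact (hSmem b).2 ⟨hbF, Or.inl hb1⟩
        exact Or.inl (iso_K2 (fun h => hab (v2 h)) ((v4 a b).2 hAB) hSet)
    · by_cases hcol : pz.2 ∈ Cols
      · -- only the column of z meets the hexagon: the triple μ-graph is K₂
        obtain ⟨a, b, hab, ha1, hb1, hcfil⟩ := grid_col_struct hP2 (Finset.mem_image.1 hcol)
        have haF : a ∈ F := by
          have h : a ∈ F.filter (fun q => q.2 = pz.2) := by rw [hcfil]; simp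
          exact (Finset.mem_filter.1 h).1
        have hbF : b ∈ F := by
          have h : b ∈ F.filter (fun q => q.2 = pz.2) := by rw [hcfil]; simp
          exact (Finset.mem_filter.1 h).1
        have hAB : (gridGraph n m).Adj a b := ⟨hab, Or.inr (ha1.trans hb1.symm)⟩
        have hSet : {w : V | Γ.Adj x w ∧ Γ.Adj y w ∧ Γ.Adj z w} = {vert a, vert b} := by
          ext w
          simp only [Set.mem_setOf_eq, Set.mem_insert_iff, Set.mem_singleton_iff]
          constructor
          · intro hw
            obtain ⟨q, rfl⟩ := hSrep w hw.2.1
            obtain ⟨hqF, hco⟩ := (hSmem q).1 hw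
            have h : q.2 = pz.2 := by
              rcases hco with h | h
              · exact absurd (Finset.mem_image.2 ⟨q, hqF, h⟩) hrow
              · exact h
            have hq : q ∈ F.filter (fun q => q.2 = pz.2) := Finset.mem_filter.2 ⟨hqF, h⟩
            rw [hcfil] at hq
            simp only [Finset.mem_insert, Finset.mem_singleton] at hq
            rcases hq with rfl | rfl
            · exact Or.inl rfl
            · exact Or.inr rfl
          · rintro (rfl | rfl)
            · exact (hSmem a).2 ⟨haF, Or.inr ha1⟩
            · exact (hSmem b).2 ⟨hbF, Or.inr hb1⟩
        exact Or.inl (iso_K2 (fun h => hab (v2 h)) ((v4 a b).2 hAB) hSet)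
      · -- impossible: z is in the region
        rcases (hRegmem pz).1 hpzR with h | h
        · exact absurd h hrow
        · exact absurd h hcol
  · -- backward direction
    intro hiso
    by_contra hyz
    by_cases heq : y = z
    · -- y = z : the set of common neighbours has 6 elements, not 2 or 4
      subst heq
      have h6 := hc2 x y hy
      have hSeq : {w : V | Γ.Adj x w ∧ Γ.Adj y w ∧ Γ.Adj y w}
          = {w : V | Γ.Adj x w ∧ Γ.Adj y w} := by
        ext w
        simp only [Set.mem_setOf_eq]
        tauto
      have hncard : {w : V | Γ.Adj x w ∧ Γ.Adj y w ∧ Γ.Adj y w}.ncard = 6 := by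
        rw [hSeq]; exact h6
      rcases hiso with he | he <;> obtain ⟨e⟩ := he
      · have h2 : {w : V | Γ.Adj x w ∧ Γ.Adj y w ∧ Γ.Adj y w}.ncard = 2 := by
          rw [← Nat.card_coe_set_eq, Nat.card_congr e.toEquiv,
            Nat.card_eq_fintype_card, Fintype.card_fin]
        omega
      · have h4 : {w : V | Γ.Adj x w ∧ Γ.Adj y w ∧ Γ.Adj y w}.ncard = 4 := by
          rw [← Nat.card_coe_set_eq, Nat.card_congr e.toEquiv,
            Nat.card_eq_fintype_card, Fintype.card_fin]
        omega
    · -- y ≠ z : the induced graph would contain an edge, which is impossible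
      obtain ⟨wa, wb, hwaS, hwbS, hadjab⟩ : ∃ wa wb : V,
          (Γ.Adj x wa ∧ Γ.Adj y wa ∧ Γ.Adj z wa) ∧ (Γ.Adj x wb ∧ Γ.Adj y wb ∧ Γ.Adj z wb) ∧
            Γ.Adj wa wb := by
        rcases hiso with he | he <;> obtain ⟨e⟩ := he
        · refine ⟨↑(e.symm 0), ↑(e.symm 1), (e.symm 0).2, (e.symm 1).2, ?_⟩
          have h01 : (⊤ : SimpleGraph (Fin 2)).Adj 0 1 := by simp
          exact e.symm.map_rel_iff.2 h01
        · refine ⟨↑(e.symm 0), ↑(e.symm 1), (e.symm 0).2, (e.symm 1).2, ?_⟩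
          have h01 : twoK2.Adj 0 1 := ⟨by decide, by decide⟩
          exact e.symm.map_rel_iff.2 h01
      exact no_edge_in_triple hloc hnadj_xy hnadj_xz hyz hne_xy hne_xz heq
        hwaS.1.symm hwaS.2.1.symm hwaS.2.2.symm hadjab
        hwbS.1.symm hwbS.2.1.symm hwbS.2.2.symm
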